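/- Under the two-group θ-parametrized setup, define the qualification gain disparity C_n(θ) = ∑_x μ⁺ x · V⁺ n θ x − ∑_x μ⁻ x · V⁻ n θ x. Then for every n and θ, the derivative of the squared disparity satisfies d/dθ [C_n(θ)²] = α_n(θ) · (Γ⁺_n(θ) − Γ⁻_n(θ)), where α_n(θ) = 2·C_n(θ) and, for each group s ∈ {+, −}, Γ^s_n(θ) = ∑_{k=0}^{n−1} ∑_x (μ^s (ρ^s_θ)^k)(x) · (d/dθ [p^s θ x]) · (Q^s (n−k) θ x true − Q^s (n−k) θ x false), with (μρ^k)(x) = ∑_{x₀} μ x₀ · ρ^k(x₀,x) and Q^s m θ x d = ∑_{x'} P^s x d x' · (g^s x x' + V^s (m−1) θ x'). -/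

import Mathlib

open Finset

/-- Per-state policy-gradient term, defined recursively. -/
noncomputable def sdgDfun {X : Type*} [Fintype X] (p : ℝ → X → ℝ) (ρ : ℝ → X → X → ℝ)
    (Q : ℕ → ℝ → X → Bool → ℝ) : ℕ → ℝ → X → ℝ
  | 0, _, _ => 0
  | n+1, θ, x => deriv (fun θ => p θ x) θ * (Q (n+1) θ x true - Q (n+1) θ x false)
      + ∑ x', ρ θ x x' * sdgDfun p ρ Q n θ x'

theorem sdg_groupA {X : Type*} [Fintype X] [DecidableEq X]
    (P : X → Bool → X → ℝ) (p : ℝ → X → ℝ)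
    (hpdiff : ∀ x, Differentiable ℝ (fun θ => p θ x))
    (g : X → X → ℝ) (ρ : ℝ → X → X → ℝ)
    (hρ : ∀ θ x x', ρ θ x x' = (1 - p θ x) * P x false x' + p θ x * P x true x')
    (V : ℕ → ℝ → X → ℝ) (hV0 : ∀ θ x, V 0 θ x = 0)
    (hVS : ∀ n θ x, V (n+1) θ x = ∑ d : Bool, (if d then p θ x else 1 - p θ x)
        * ∑ x', P x d x' * (g x x' + V n θ x'))
    (Q : ℕ → ℝ → X → Bool → ℝ)
    (hQ : ∀ m θ x d, Q m θ x d = ∑ x', P x d x' * (g x x' + V (m-1) θ x')) :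
    ∀ n θ x, HasDerivAt (fun θ => V n θ x) (sdgDfun p ρ Q n θ x) θ := by
  intro n
  induction n with
  | zero =>
    intro θ x
    simp only [hV0, sdgDfun]
    exact hasDerivAt_const θ 0
  | succ n ih =>
    intro θ x
    have hrw : (fun θ => V (n+1) θ x)
        = fun θ => p θ x * (∑ x', P x true x' * (g x x' + V n θ x'))
            + (1 - p θ x) * (∑ x', P x false x' * (g x x' + V n θ x')) := by
      funext θ; rw [hVS]; simp [Fintype.sum_bool]
    rw [hrw]
    have hp := ((hpdiff x) θ).hasDerivAt
    have hsum : ∀ d : Bool, HasDerivAt (fun θ => ∑ x', P x d x' * (g x x' + V n θ x'))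
        (∑ x', P x d x' * sdgDfun p ρ Q n θ x') θ := by
      intro d
      apply HasDerivAt.fun_sum
      intro x' _
      exact ((ih θ x').const_add (g x x')).const_mul (P x d x')
    have h := (hp.fun_mul (hsum true)).fun_add (((hasDerivAt_const θ (1:ℝ)).fun_sub hp).fun_mul (hsum false))
    refine h.congr_deriv ?_
    simp only [sdgDfun, hQ, Nat.add_sub_cancel]
    have hρD : ∑ x', ρ θ x x' * sdgDfun p ρ Q n θ x'
        = (1 - p θ x) * (∑ x', P x false x' * sdgDfun p ρ Q n θ x')
          + p θ x * (∑ x', P x true x' * sdgDfun p ρ Q n θ x') := by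
      simp only [hρ, add_mul, Finset.sum_add_distrib, Finset.mul_sum, mul_assoc]
    rw [hρD]
    ring

theorem sdg_groupB {X : Type*} [Fintype X] [DecidableEq X]
    (p : ℝ → X → ℝ) (ρ : ℝ → X → X → ℝ)
    (ρk : ℝ → ℕ → X → X → ℝ)
    (hρk0 : ∀ θ x x', ρk θ 0 x x' = if x = x' then 1 else 0)
    (hρkS : ∀ θ k x x', ρk θ (k+1) x x' = ∑ y, ρ θ x y * ρk θ k y x')
    (Q : ℕ → ℝ → X → Bool → ℝ) :
    ∀ (n : ℕ) (θ : ℝ) (μ : X → ℝ), ∑ x, μ x * sdgDfun p ρ Q n θ x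
      = ∑ k ∈ Finset.range n, ∑ x, (∑ x₀, μ x₀ * ρk θ k x₀ x) * deriv (fun θ => p θ x) θ
          * (Q (n-k) θ x true - Q (n-k) θ x false) := by
  intro n
  induction n with
  | zero => intro θ μ; simp [sdgDfun]
  | succ n ih =>
    intro θ μ
    simp only [sdgDfun, mul_add, Finset.sum_add_distrib]
    rw [Finset.sum_range_succ']
    have h0 : ∑ x, μ x * (deriv (fun θ => p θ x) θ * (Q (n+1) θ x true - Q (n+1) θ x false))
        = ∑ x, (∑ x₀, μ x₀ * ρk θ 0 x₀ x) * deriv (fun θ => p θ x) θ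
            * (Q (n+1-0) θ x true - Q (n+1-0) θ x false) := by
      apply Finset.sum_congr rfl
      intro x _
      simp [hρk0, mul_ite, mul_assoc]
    have h1 : ∑ x, μ x * ∑ x', ρ θ x x' * sdgDfun p ρ Q n θ x'
        = ∑ x', (∑ x, μ x * ρ θ x x') * sdgDfun p ρ Q n θ x' := by
      simp_rw [Finset.mul_sum, Finset.sum_mul, ← mul_assoc]
      exact Finset.sum_comm
    rw [h0, h1, ih θ (fun x' => ∑ x, μ x * ρ θ x x'), add_comm]
    congr 1
    apply Finset.sum_congr rfl
    intro k _
    apply Finset.sum_congr rfl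
    intro x _
    have hker : ∑ x₀, (∑ y, μ y * ρ θ y x₀) * ρk θ k x₀ x
        = ∑ x₀, μ x₀ * ρk θ (k+1) x₀ x := by
      simp_rw [hρkS, Finset.mul_sum, Finset.sum_mul, ← mul_assoc]
      exact Finset.sum_comm
    rw [hker, Nat.succ_sub_succ]


theorem sdg_groupMain {X : Type*} [Fintype X] [DecidableEq X]
    (P : X → Bool → X → ℝ) (p : ℝ → X → ℝ)
    (hpdiff : ∀ x, Differentiable ℝ (fun θ => p θ x))
    (g : X → X → ℝ) (ρ : ℝ → X → X → ℝ)
    (hρ : ∀ θ x x', ρ θ x x' = (1 - p θ x) * P x false x' + p θ x * P x true x')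
    (ρk : ℝ → ℕ → X → X → ℝ)
    (hρk0 : ∀ θ x x', ρk θ 0 x x' = if x = x' then 1 else 0)
    (hρkS : ∀ θ k x x', ρk θ (k+1) x x' = ∑ y, ρ θ x y * ρk θ k y x')
    (V : ℕ → ℝ → X → ℝ) (hV0 : ∀ θ x, V 0 θ x = 0)
    (hVS : ∀ n θ x, V (n+1) θ x = ∑ d : Bool, (if d then p θ x else 1 - p θ x)
        * ∑ x', P x d x' * (g x x' + V n θ x'))
    (Q : ℕ → ℝ → X → Bool → ℝ)
    (hQ : ∀ m θ x d, Q m θ x d = ∑ x', P x d x' * (g x x' + V (m-1) θ x'))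
    (μ : X → ℝ) (n : ℕ) (θ : ℝ) :
    HasDerivAt (fun θ => ∑ x, μ x * V n θ x)
      (∑ k ∈ Finset.range n, ∑ x, (∑ x₀, μ x₀ * ρk θ k x₀ x) * deriv (fun θ => p θ x) θ
          * (Q (n-k) θ x true - Q (n-k) θ x false)) θ := by
  have h := HasDerivAt.fun_sum (fun x (_ : x ∈ Finset.univ) =>
    ((sdg_groupA P p hpdiff g ρ hρ V hV0 hVS Q hQ n θ x).const_mul (μ x)))
  rwa [sdg_groupB p ρ ρk hρk0 hρkS Q n θ μ] at h

/-- gradient of the squared qualification gain disparity in the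
two-group θ-parametrized setup:
`d/dθ [C_n(θ)²] = α_n(θ) · (Γ⁺_n(θ) − Γ⁻_n(θ))` with `α_n(θ) = 2·C_n(θ)`.
Group `s⁺` data carries suffix `p`, group `s⁻` suffix `m`. -/
theorem squared_disparity_gradient {X : Type*} [Fintype X] [Nonempty X] [DecidableEq X]
    -- group s⁺ : kernel, parametrized policy, gain, initial distribution
    (Pp : X → Bool → X → ℝ)
    (hPpnonneg : ∀ (x : X) (d : Bool) (x' : X), 0 ≤ Pp x d x')
    (hPpsum : ∀ (x : X) (d : Bool), ∑ x', Pp x d x' = 1)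
    (pp : ℝ → X → ℝ)
    (hpp0 : ∀ (θ : ℝ) (x : X), 0 ≤ pp θ x) (hpp1 : ∀ (θ : ℝ) (x : X), pp θ x ≤ 1)
    (hppdiff : ∀ x : X, Differentiable ℝ (fun θ => pp θ x))
    (gp : X → X → ℝ)
    (μp : X → ℝ) (hμp0 : ∀ x, 0 ≤ μp x) (hμp1 : ∑ x, μp x = 1)
    -- group s⁻ : kernel, parametrized policy, gain, initial distribution
    (Pm : X → Bool → X → ℝ)
    (hPmnonneg : ∀ (x : X) (d : Bool) (x' : X), 0 ≤ Pm x d x')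
    (hPmsum : ∀ (x : X) (d : Bool), ∑ x', Pm x d x' = 1)
    (pm : ℝ → X → ℝ)
    (hpm0 : ∀ (θ : ℝ) (x : X), 0 ≤ pm θ x) (hpm1 : ∀ (θ : ℝ) (x : X), pm θ x ≤ 1)
    (hpmdiff : ∀ x : X, Differentiable ℝ (fun θ => pm θ x))
    (gm : X → X → ℝ)
    (μm : X → ℝ) (hμm0 : ∀ x, 0 ≤ μm x) (hμm1 : ∑ x, μm x = 1)
    -- one-step mixed kernels and k-step kernels, parametrized by θ
    (ρp : ℝ → X → X → ℝ)
    (hρp : ∀ (θ : ℝ) (x x' : X),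
      ρp θ x x' = (1 - pp θ x) * Pp x false x' + pp θ x * Pp x true x')
    (ρkp : ℝ → ℕ → X → X → ℝ)
    (hρkp0 : ∀ (θ : ℝ) (x x' : X), ρkp θ 0 x x' = if x = x' then 1 else 0)
    (hρkpS : ∀ (θ : ℝ) (k : ℕ) (x x' : X),
      ρkp θ (k + 1) x x' = ∑ y, ρp θ x y * ρkp θ k y x')
    (ρm : ℝ → X → X → ℝ)
    (hρm : ∀ (θ : ℝ) (x x' : X),
      ρm θ x x' = (1 - pm θ x) * Pm x false x' + pm θ x * Pm x true x')
    (ρkm : ℝ → ℕ → X → X → ℝ)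
    (hρkm0 : ∀ (θ : ℝ) (x x' : X), ρkm θ 0 x x' = if x = x' then 1 else 0)
    (hρkmS : ∀ (θ : ℝ) (k : ℕ) (x x' : X),
      ρkm θ (k + 1) x x' = ∑ y, ρm θ x y * ρkm θ k y x')
    -- finite-horizon state value functions
    (Vp : ℕ → ℝ → X → ℝ) (hVp0 : ∀ (θ : ℝ) (x : X), Vp 0 θ x = 0)
    (hVpS : ∀ (n : ℕ) (θ : ℝ) (x : X), Vp (n + 1) θ x
      = ∑ d : Bool, (if d then pp θ x else 1 - pp θ x)
          * ∑ x', Pp x d x' * (gp x x' + Vp n θ x'))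
    (Vm : ℕ → ℝ → X → ℝ) (hVm0 : ∀ (θ : ℝ) (x : X), Vm 0 θ x = 0)
    (hVmS : ∀ (n : ℕ) (θ : ℝ) (x : X), Vm (n + 1) θ x
      = ∑ d : Bool, (if d then pm θ x else 1 - pm θ x)
          * ∑ x', Pm x d x' * (gm x x' + Vm n θ x'))
    -- action value functions
    (Qp : ℕ → ℝ → X → Bool → ℝ)
    (hQp : ∀ (m : ℕ) (θ : ℝ) (x : X) (d : Bool),
      Qp m θ x d = ∑ x', Pp x d x' * (gp x x' + Vp (m - 1) θ x'))
    (Qm : ℕ → ℝ → X → Bool → ℝ)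
    (hQm : ∀ (m : ℕ) (θ : ℝ) (x : X) (d : Bool),
      Qm m θ x d = ∑ x', Pm x d x' * (gm x x' + Vm (m - 1) θ x'))
    -- qualification gain disparity
    (C : ℕ → ℝ → ℝ)
    (hC : ∀ (n : ℕ) (θ : ℝ),
      C n θ = (∑ x, μp x * Vp n θ x) - ∑ x, μm x * Vm n θ x) :
    ∀ (n : ℕ) (θ : ℝ),
      HasDerivAt (fun θ => (C n θ) ^ 2)
        ((2 * C n θ) *
          ((∑ k ∈ Finset.range n, ∑ x,
              (∑ x₀, μp x₀ * ρkp θ k x₀ x) * deriv (fun θ => pp θ x) θ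
                * (Qp (n - k) θ x true - Qp (n - k) θ x false))
            - ∑ k ∈ Finset.range n, ∑ x,
                (∑ x₀, μm x₀ * ρkm θ k x₀ x) * deriv (fun θ => pm θ x) θ
                  * (Qm (n - k) θ x true - Qm (n - k) θ x false))) θ := by
  intro n θ
  have hFp := sdg_groupMain Pp pp hppdiff gp ρp hρp ρkp hρkp0 hρkpS Vp hVp0 hVpS Qp hQp μp n θ
  have hFm := sdg_groupMain Pm pm hpmdiff gm ρm hρm ρkm hρkm0 hρkmS Vm hVm0 hVmS Qm hQm μm n θ
  have hCd := by
    have hfun : (fun θ => C n θ)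
        = fun θ => (∑ x, μp x * Vp n θ x) - ∑ x, μm x * Vm n θ x :=
      funext fun θ => hC n θ
    exact hfun ▸ hFp.fun_sub hFm
  have h2 := hCd.fun_pow 2
  refine h2.congr_deriv ?_
  push_cast
  ring
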